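/- Let X be a d-dimensional simplicial complex such that the down-up random walk on X(k−1) within each vertex link X_i has second singular value at most 1/√k, and let F : X(k) → Σ^k satisfy: for a vertex i, with p_i := Pr over B ∼ X_i(√k − 1) and A, A' ⊇ B in X_i(k−1) of the event F[A∪{i}]|_i ≠ F[A'∪{i}]|_i, we have p_i ≤ √(6δ). Then there exists σ ∈ Σ such that Pr over A ∼ X_i(k−1) of F[A∪{i}]|_i = σ is at least 1 − O(√δ). -/

import Mathlib

open Finset
open scoped Classical

/-- **majority decoding from a spectral walk.**
There is a universal constant `C` such that the following holds.  Let `Ω` be the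
set of `(k−1)`-faces of the link of a vertex `i`, with measure `ν`, and let `w`
be the joint distribution of the down-up walk on `Ω` (both marginals equal `ν`),
whose second singular value is at most `1/√k` (hypothesis `hwalk`).  Let
`c : Ω → Λ` record the label `F[A ∪ {i}]|_i` of each face `A`, and let
`p = Pr_{(A,A') ∼ w}[c A ≠ c A']` satisfy `p ≤ √(6δ)`.  Then there exists
`σ ∈ Λ` such that `Pr_{A ∼ ν}[c A = σ] ≥ 1 − C·√δ`. -/
theorem walk_majority_decoding :
    ∃ C : ℝ, 0 < C ∧
    ∀ (Ω Λ : Type) (_ : Fintype Ω) (ν : Ω → ℝ) (w : Ω → Ω → ℝ)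
      (c : Ω → Λ) (k δ : ℝ),
      (∀ A, 0 ≤ ν A) → (∑ A, ν A = 1) →
      (∀ A A', 0 ≤ w A A') →
      (∀ A, ∑ A', w A A' = ν A) → (∀ A', ∑ A, w A A' = ν A') →
      (4 : ℝ) ≤ k → 0 ≤ δ →
      (∀ f : Ω → ℝ, (∑ A, ν A * f A = 0) →
        |∑ A, ∑ A', w A A' * f A * f A'| ≤
          (1 / Real.sqrt k) * ∑ A, ν A * (f A) ^ 2) →
      (∑ A, ∑ A', w A A' * (if c A = c A' then (0 : ℝ) else 1)) ≤
        Real.sqrt (6 * δ) →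
      ∃ σ : Λ, 1 - C * Real.sqrt δ ≤
        ∑ A ∈ Finset.univ.filter (fun A => c A = σ), ν A := by
  refine ⟨5, by norm_num, ?_⟩
  intro Ω Λ _ ν w c k δ hν hνsum hw hrow hcol hk hδ hwalk hp
  -- Ω is nonempty
  have hΩne : (Finset.univ : Finset Ω).Nonempty := by
    rcases (Finset.univ : Finset Ω).eq_empty_or_nonempty with h | h
    · rw [h] at hνsum; simp at hνsum
    · exact h
  -- the spectral bound λ = 1/√k ≤ 1/2
  have hsqrtk : (2 : ℝ) ≤ Real.sqrt k := by
    have : Real.sqrt 4 ≤ Real.sqrt k := Real.sqrt_le_sqrt hk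
    rwa [show (4 : ℝ) = 2 ^ 2 by norm_num, Real.sqrt_sq (by norm_num)] at this
  have hlamhalf : (1 : ℝ) / Real.sqrt k ≤ 1 / 2 := by
    apply one_div_le_one_div_of_le (by norm_num) hsqrtk
  set lam : ℝ := 1 / Real.sqrt k with hlam
  have hlam0 : 0 ≤ lam := by
    apply div_nonneg (by norm_num)
    exact Real.sqrt_nonneg k
  -- indicator functions
  set ind : Λ → Ω → ℝ := fun σ A => if c A = σ then 1 else 0 with hind
  have hind01 : ∀ σ A, ind σ A = 0 ∨ ind σ A = 1 := by
    intro σ A; by_cases h : c A = σ <;> simp [hind, h]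
  have hindsq : ∀ σ A, ind σ A ^ 2 = ind σ A := by
    intro σ A; rcases hind01 σ A with h | h <;> rw [h] <;> ring
  set pi : Λ → ℝ := fun σ => ∑ A, ν A * ind σ A with hpi
  have hpi0 : ∀ σ, 0 ≤ pi σ := by
    intro σ
    apply Finset.sum_nonneg
    intro A _
    rcases hind01 σ A with h | h <;> rw [h]
    · simp
    · simpa using hν A
  have hpi1 : ∀ σ, pi σ ≤ 1 := by
    intro σ
    rw [← hνsum]
    apply Finset.sum_le_sum
    intro A _
    rcases hind01 σ A with h | h <;> rw [h]
    · simpa using hν A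
    · simp
  -- per-σ quantities
  set q : Λ → ℝ := fun σ => ∑ A, ∑ A', w A A' * ind σ A * ind σ A' with hq
  have hS1 : ∀ σ, (∑ A, ∑ A', w A A' * ind σ A) = pi σ := by
    intro σ
    have : ∀ A, (∑ A', w A A' * ind σ A) = ν A * ind σ A := by
      intro A
      rw [← Finset.sum_mul, hrow]
    simp_rw [this]
    rfl
  have hS2 : ∀ σ, (∑ A, ∑ A', w A A' * ind σ A') = pi σ := by
    intro σ
    rw [Finset.sum_comm]
    have : ∀ A', (∑ A, w A A' * ind σ A') = ν A' * ind σ A' := by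
      intro A'
      rw [← Finset.sum_mul, hcol]
    simp_rw [this]
    rfl
  have hT : (∑ A, ∑ A', w A A') = 1 := by
    simp_rw [hrow]; exact hνsum
  -- spectral step: |q σ − (pi σ)²| ≤ lam · pi σ (1 − pi σ)
  have hspec : ∀ σ, |q σ - pi σ ^ 2| ≤ lam * (pi σ * (1 - pi σ)) := by
    intro σ
    have hmean : (∑ A, ν A * (ind σ A - pi σ)) = 0 := by
      simp_rw [mul_sub]
      rw [Finset.sum_sub_distrib, ← Finset.sum_mul, hνsum]
      simp [hpi]
    have h := hwalk (fun A => ind σ A - pi σ) hmean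
    have hlhs : (∑ A, ∑ A', w A A' * (ind σ A - pi σ) * (ind σ A' - pi σ))
        = q σ - pi σ ^ 2 := by
      have he : ∀ A A', w A A' * (ind σ A - pi σ) * (ind σ A' - pi σ)
          = w A A' * ind σ A * ind σ A' - pi σ * (w A A' * ind σ A)
            - pi σ * (w A A' * ind σ A') + pi σ ^ 2 * w A A' := by
        intro A A'; ring
      simp_rw [he]
      rw [show (∑ A, ∑ A', (w A A' * ind σ A * ind σ A' - pi σ * (w A A' * ind σ A)
            - pi σ * (w A A' * ind σ A') + pi σ ^ 2 * w A A'))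
          = (∑ A, ∑ A', w A A' * ind σ A * ind σ A')
            - pi σ * (∑ A, ∑ A', w A A' * ind σ A)
            - pi σ * (∑ A, ∑ A', w A A' * ind σ A')
            + pi σ ^ 2 * (∑ A, ∑ A', w A A') by
        simp only [Finset.sum_sub_distrib, Finset.sum_add_distrib, Finset.mul_sum]]
      rw [hS1, hS2, hT]
      simp only [hq]
      ring
    have hrhs : (∑ A, ν A * (ind σ A - pi σ) ^ 2) = pi σ * (1 - pi σ) := by
      have he : ∀ A, ν A * (ind σ A - pi σ) ^ 2
          = ν A * ind σ A ^ 2 - 2 * pi σ * (ν A * ind σ A) + pi σ ^ 2 * ν A := by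
        intro A; ring
      simp_rw [he, hindsq]
      rw [show (∑ A, (ν A * ind σ A - 2 * pi σ * (ν A * ind σ A) + pi σ ^ 2 * ν A))
          = (∑ A, ν A * ind σ A) - 2 * pi σ * (∑ A, ν A * ind σ A)
            + pi σ ^ 2 * (∑ A, ν A) by
        simp only [Finset.sum_sub_distrib, Finset.sum_add_distrib, Finset.mul_sum]]
      rw [hνsum]
      simp only [hpi]
      ring
    rw [hlhs, hrhs] at h
    exact h
  -- the crossing mass for σ
  set x : Λ → ℝ := fun σ => ∑ A, ∑ A',
      w A A' * (ind σ A + ind σ A' - 2 * (ind σ A * ind σ A')) with hx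
  have hxval : ∀ σ, x σ = pi σ + pi σ - 2 * q σ := by
    intro σ
    have he : ∀ A A', w A A' * (ind σ A + ind σ A' - 2 * (ind σ A * ind σ A'))
        = w A A' * ind σ A + w A A' * ind σ A'
          - 2 * (w A A' * ind σ A * ind σ A') := by
      intro A A'; ring
    simp_rw [hx, he]
    rw [show (∑ A, ∑ A', (w A A' * ind σ A + w A A' * ind σ A'
          - 2 * (w A A' * ind σ A * ind σ A')))
        = (∑ A, ∑ A', w A A' * ind σ A) + (∑ A, ∑ A', w A A' * ind σ A')
          - 2 * (∑ A, ∑ A', w A A' * ind σ A * ind σ A') by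
      simp only [Finset.sum_sub_distrib, Finset.sum_add_distrib, Finset.mul_sum]]
    rw [hS1, hS2]
  have hxlow : ∀ σ, pi σ * (1 - pi σ) ≤ x σ := by
    intro σ
    have h1 : q σ - pi σ ^ 2 ≤ lam * (pi σ * (1 - pi σ)) :=
      le_trans (le_abs_self _) (hspec σ)
    have hnn : 0 ≤ pi σ * (1 - pi σ) :=
      mul_nonneg (hpi0 σ) (by linarith [hpi1 σ])
    have h2 : lam * (pi σ * (1 - pi σ)) ≤ (1 / 2) * (pi σ * (1 - pi σ)) :=
      mul_le_mul_of_nonneg_right hlamhalf hnn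
    rw [hxval σ]
    nlinarith
  set T : Finset Λ := Finset.univ.image c with hT'
  have hpointwise : ∀ A A', (∑ σ ∈ T, (ind σ A + ind σ A' - 2 * (ind σ A * ind σ A')))
      = 2 * (if c A = c A' then (0 : ℝ) else 1) := by
    intro A A'
    rw [Finset.sum_sub_distrib, Finset.sum_add_distrib]
    have h1 : (∑ σ ∈ T, ind σ A) = 1 := by
      simp only [hind]
      rw [Finset.sum_ite_eq T (c A) (fun _ => (1 : ℝ))]
      simp [hT', Finset.mem_image]
    have h2 : (∑ σ ∈ T, ind σ A') = 1 := by
      simp only [hind]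
      rw [Finset.sum_ite_eq T (c A') (fun _ => (1 : ℝ))]
      simp [hT', Finset.mem_image]
    have h3 : (∑ σ ∈ T, ind σ A * ind σ A') = if c A = c A' then 1 else 0 := by
      have he : ∀ σ, ind σ A * ind σ A'
          = if c A = σ then ind σ A' else 0 := by
        intro σ
        by_cases h : c A = σ <;> simp [hind, h]
      simp_rw [he]
      rw [Finset.sum_ite_eq T (c A) (fun σ => ind σ A')]
      have hmem : c A ∈ T := by simp [hT', Finset.mem_image]
      rw [if_pos hmem]
      simp only [hind]
      by_cases h : c A = c A'
      · simp [h]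
      · rw [if_neg (fun hh => h hh.symm), if_neg h]
    rw [h1, h2, ← Finset.mul_sum, h3]
    split_ifs <;> norm_num
  have hxsum : (∑ σ ∈ T, x σ) ≤ 2 * Real.sqrt (6 * δ) := by
    have : (∑ σ ∈ T, x σ)
        = ∑ A, ∑ A', w A A' * (2 * (if c A = c A' then (0 : ℝ) else 1)) := by
      simp_rw [hx]
      rw [Finset.sum_comm]
      congr 1
      ext A
      rw [Finset.sum_comm]
      congr 1
      ext A'
      rw [← Finset.mul_sum, hpointwise]
    rw [this]
    have h2 : (∑ A, ∑ A', w A A' * (2 * (if c A = c A' then (0 : ℝ) else 1)))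
        = 2 * ∑ A, ∑ A', w A A' * (if c A = c A' then (0 : ℝ) else 1) := by
      simp_rw [Finset.mul_sum]
      congr 1; ext A; congr 1; ext A'; ring
    rw [h2]
    linarith [hp]
  -- total measure on T is 1
  have hpisum : (∑ σ ∈ T, pi σ) = 1 := by
    simp_rw [hpi]
    rw [Finset.sum_comm]
    have : ∀ A, (∑ σ ∈ T, ν A * ind σ A) = ν A := by
      intro A
      rw [← Finset.mul_sum]
      simp only [hind]
      rw [Finset.sum_ite_eq T (c A) (fun _ => (1 : ℝ))]
      simp [hT', Finset.mem_image]
    simp_rw [this]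
    exact hνsum
  -- pick the majority label
  have hTne : T.Nonempty := hΩne.image c
  obtain ⟨σ, hσT, hσmax⟩ := T.exists_max_image pi hTne
  refine ⟨σ, ?_⟩
  have key : 1 - pi σ ≤ 2 * Real.sqrt (6 * δ) := by
    have h1 : (∑ τ ∈ T, pi τ * (1 - pi σ)) ≤ ∑ τ ∈ T, pi τ * (1 - pi τ) := by
      apply Finset.sum_le_sum
      intro τ hτ
      exact mul_le_mul_of_nonneg_left (by linarith [hσmax τ hτ]) (hpi0 τ)
    have h2 : (∑ τ ∈ T, pi τ * (1 - pi τ)) ≤ ∑ τ ∈ T, x τ :=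
      Finset.sum_le_sum fun τ _ => hxlow τ
    have h3 : (∑ τ ∈ T, pi τ * (1 - pi σ)) = 1 - pi σ := by
      rw [← Finset.sum_mul, hpisum, one_mul]
    linarith
  have hsqrt : Real.sqrt (6 * δ) = Real.sqrt 6 * Real.sqrt δ :=
    Real.sqrt_mul (by norm_num) δ
  have h6 : Real.sqrt 6 ≤ 2.5 := by
    rw [show (2.5 : ℝ) = Real.sqrt (2.5 ^ 2) by
      rw [Real.sqrt_sq (by norm_num)]]
    exact Real.sqrt_le_sqrt (by norm_num)
  have hfin : 2 * Real.sqrt (6 * δ) ≤ 5 * Real.sqrt δ := by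
    rw [hsqrt]
    nlinarith [Real.sqrt_nonneg δ, Real.sqrt_nonneg (6 : ℝ)]
  have hgoal : (∑ A ∈ Finset.univ.filter (fun A => c A = σ), ν A) = pi σ := by
    rw [Finset.sum_filter]
    simp_rw [hpi, hind]
    congr 1
    ext A
    by_cases h : c A = σ <;> simp [h]
  rw [hgoal]
  linarith
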